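/- Let L be the Laplacian of a connected graph partitioned by F and T (with L_FF invertible) and let P = [−L_TF·L_FF^{-1}, I_T] be the projection. Then for every b, ‖b_F‖²_{L_FF^{-1}} = ‖b_F − P·b_F‖²_{L^†}, where b_F is b restricted to F (zero on T) and P·b_F is viewed as an n-vector supported on T. In other words, the energy of routing b_F inside F equals the energy of routing the demand b_F − P·b_F in the whole graph. -/

import Mathlib

open Matrix BigOperators

/-- The Laplacian matrix of a weighted graph given by a weight function `w`. -/
def lap {V : Type*} [Fintype V] [DecidableEq V] (w : V → V → ℝ) : Matrix V V ℝ :=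
  Matrix.diagonal (fun i => ∑ k, w i k) - Matrix.of w

/-- `B` is the Moore–Penrose pseudoinverse of `A`. -/
def IsMoorePenrose {n : Type*} [Fintype n] (A B : Matrix n n ℝ) : Prop :=
  A * B * A = A ∧ B * A * B = B ∧ (A * B)ᵀ = A * B ∧ (B * A)ᵀ = B * A

lemma lap_symm {V : Type*} [Fintype V] [DecidableEq V] (w : V → V → ℝ)
    (hs : ∀ a b, w a b = w b a) : (lap w)ᵀ = lap w := by
  ext i j
  simp only [lap, Matrix.transpose_apply, Matrix.sub_apply, Matrix.diagonal_apply,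
    Matrix.of_apply]
  rcases eq_or_ne i j with h | h
  · subst h; rw [hs]
  · simp [h, Ne.symm h, hs i j]

lemma mulVec_dot {n : Type*} [Fintype n] (A : Matrix n n ℝ) (y z : n → ℝ) :
    (A *ᵥ y) ⬝ᵥ z = y ⬝ᵥ (Aᵀ *ᵥ z) := by
  rw [dotProduct_comm, dotProduct_mulVec, mulVec_transpose, dotProduct_comm]


/-- the energy of routing `b_F` inside the block `L_FF` equals the
energy of routing the demand `b_F − P·b_F` in the whole graph:
`‖b_F‖²_{L_FF⁻¹} = ‖b_F − P·b_F‖²_{L†}`. -/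
theorem block_energy_eq_projected_energy
    {F T : Type*} [Fintype F] [Fintype T] [DecidableEq F] [DecidableEq T]
    [Nonempty T]
    (w : F ⊕ T → F ⊕ T → ℝ)
    (hsymm : ∀ a b, w a b = w b a) (hnonneg : ∀ a b, 0 ≤ w a b)
    (hconn : ∀ x : F ⊕ T → ℝ, (lap w) *ᵥ x = 0 → ∃ c, ∀ v, x v = c)
    (hFF : IsUnit ((lap w).toBlocks₁₁).det)
    (Ldag : Matrix (F ⊕ T) (F ⊕ T) ℝ) (hLdag : IsMoorePenrose (lap w) Ldag)
    (b : F ⊕ T → ℝ) :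
    -- `bF` is `b` restricted to `F` (zero on `T`); `P·bF` is extended by zeros on `F`
    (fun (bF : F ⊕ T → ℝ) (d : F ⊕ T → ℝ) =>
        (b ∘ Sum.inl) ⬝ᵥ (((lap w).toBlocks₁₁)⁻¹ *ᵥ (b ∘ Sum.inl))
          = d ⬝ᵥ (Ldag *ᵥ d))
      (Sum.elim (b ∘ Sum.inl) (0 : T → ℝ))
      (Sum.elim (b ∘ Sum.inl) (0 : T → ℝ)
        - Sum.elim (0 : F → ℝ)
            ((Matrix.fromCols (-((lap w).toBlocks₂₁ * ((lap w).toBlocks₁₁)⁻¹)) 1)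
              *ᵥ Sum.elim (b ∘ Sum.inl) (0 : T → ℝ))) := by
  simp only
  set A := lap w with hA
  set bF : F → ℝ := b ∘ Sum.inl with hbF
  set x : F → ℝ := (A.toBlocks₁₁)⁻¹ *ᵥ bF with hx
  have hAsymm : Aᵀ = A := lap_symm w hsymm
  have hMP : A * Ldag * A = A := hLdag.1
  have hinv : A.toBlocks₁₁ * (A.toBlocks₁₁)⁻¹ = 1 := Matrix.mul_nonsing_inv _ hFF
  have hd : (Sum.elim bF (0 : T → ℝ)
        - Sum.elim (0 : F → ℝ)
            ((Matrix.fromCols (-(A.toBlocks₂₁ * (A.toBlocks₁₁)⁻¹)) 1)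
              *ᵥ Sum.elim bF (0 : T → ℝ))) = A *ᵥ Sum.elim x (0 : T → ℝ) := by
    have h1 : (Matrix.fromCols (-(A.toBlocks₂₁ * (A.toBlocks₁₁)⁻¹)) 1)
              *ᵥ Sum.elim bF (0 : T → ℝ) = -(A.toBlocks₂₁ *ᵥ x) := by
      rw [Matrix.fromCols_mulVec_sumElim]
      simp [hx, Matrix.mulVec_mulVec, Matrix.neg_mulVec]
    rw [h1]
    conv_rhs => rw [← Matrix.fromBlocks_toBlocks A]
    rw [Matrix.fromBlocks_mulVec]
    have hx1 : A.toBlocks₁₁ *ᵥ x = bF := by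
      rw [hx, Matrix.mulVec_mulVec, hinv, Matrix.one_mulVec]
    simp [hx1]
    ext (i | i) <;> simp
  rw [hd, Matrix.mulVec_mulVec, mulVec_dot, hAsymm, Matrix.mulVec_mulVec,
    ← Matrix.mul_assoc, hMP, ← hd]
  rw [show (Sum.elim bF (0 : T → ℝ)
        - Sum.elim (0 : F → ℝ)
            ((Matrix.fromCols (-(A.toBlocks₂₁ * (A.toBlocks₁₁)⁻¹)) 1)
              *ᵥ Sum.elim bF (0 : T → ℝ))) = Sum.elim bF
        (-((Matrix.fromCols (-(A.toBlocks₂₁ * (A.toBlocks₁₁)⁻¹)) 1)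
              *ᵥ Sum.elim bF (0 : T → ℝ))) by ext (i | i) <;> simp]
  rw [sumElim_dotProduct_sumElim, zero_dotProduct, add_zero, dotProduct_comm]
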